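/- Multilinearity sum identity: for m ∈ {0,1} and n ≥ 1, Σ_{j=m}^{n-1+m} det(A_m,…,A_{j-1}, B_j, A_{j+1},…,A_{n-1+m}) = (2n−1+m) c₀ H^m_n, where A_j is the column (c_j, c_{j+1}, …, c_{j+n-1})ᵀ and B_j is the column whose i-th entry is Σ_{k=0}^{j+i} c_k c_{j+i−k} (Cauchy-product convolution column). -/

import Mathlib

/-- Hankel determinant `H^m_n = det(c_{i+j+m})`. -/
noncomputable def Hk (c : ℕ → ℝ) (m n : ℕ) : ℝ :=
  (Matrix.of fun i j : Fin n => c (i.val + j.val + m)).det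

/-- `G^m_n`: the Hankel determinant `H^m_n` with its last row
`(c_{m+n-1},…,c_{m+2n-2})` replaced by `(c_{m+n},…,c_{m+2n-1})`;
by convention `G^m_0 = 0`. -/
noncomputable def Gk (c : ℕ → ℝ) (m n : ℕ) : ℝ :=
  if n = 0 then 0 else
  (Matrix.of fun i j : Fin n =>
    if i.val = n - 1 then c (m + n + j.val) else c (i.val + j.val + m)).det

/-- `E^m_n`: determinant of the `n×n` matrix with rows
`(c_{m+k},…,c_{m+k+n-2}, c_{m+k+n+1})`, i.e. the last column advanced by 2. -/
noncomputable def Ek (c : ℕ → ℝ) (m n : ℕ) : ℝ :=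
  (Matrix.of fun i j : Fin n =>
    if j.val = n - 1 then c (m + i.val + n + 1) else c (m + i.val + j.val)).det

/-- `F^m_n`: determinant of the `n×n` matrix with rows
`(c_{m+k},…,c_{m+k+n-3}, c_{m+k+n-1}, c_{m+k+n})`, i.e. column `n−2` skipped;
by convention `F^m_1 = 0`. -/
noncomputable def Fk (c : ℕ → ℝ) (m n : ℕ) : ℝ :=
  if n = 1 then 0 else
  (Matrix.of fun i j : Fin n =>
    if n - 2 ≤ j.val then c (m + i.val + j.val + 1) else c (m + i.val + j.val)).det

/-- `S^m_n`: determinant of `(c_{m+σ(i)+σ(j)})` where `σ(i) = i` for `i ≤ n−2`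
and `σ(n−1) = n`. -/
noncomputable def Sk (c : ℕ → ℝ) (m n : ℕ) : ℝ :=
  (Matrix.of fun i j : Fin n =>
    c (m + (if i.val = n - 1 then n else i.val) +
        (if j.val = n - 1 then n else j.val))).det

namespace SumDetBAux

open Finset Matrix

variable (c : ℕ → ℝ)

lemma succAbove_val {n : ℕ} (p : Fin (n+1)) (i : Fin n) :
    ((p.succAbove i : Fin (n+1)) : ℕ) =
      if (i : ℕ) < (p : ℕ) then (i : ℕ) else (i : ℕ) + 1 := by
  rw [Fin.succAbove]
  split_ifs with h1 h2 h2 <;>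
    simp_all [Fin.lt_def, Fin.coe_castSucc, Fin.val_succ]

lemma sum_ite_le (f : ℕ → ℝ) {p n : ℕ} (h : p < n) :
    ∑ k ∈ range n, (if k ≤ p then f k else 0) = ∑ k ∈ range (p+1), f k := by
  rw [← Finset.sum_filter]
  congr 1
  ext k
  simp only [Finset.mem_filter, Finset.mem_range]
  omega

lemma sum_ite_mid (g : ℕ → ℝ) {i n : ℕ} (h : i < n) :
    ∑ s ∈ range n, (if 1 ≤ s ∧ s ≤ i then g s else 0) = ∑ s ∈ range i, g (s+1) := by
  rw [← Finset.sum_filter]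
  have he : (range n).filter (fun s => 1 ≤ s ∧ s ≤ i) = (range i).image (· + 1) := by
    ext k
    simp only [Finset.mem_filter, Finset.mem_range, Finset.mem_image]
    constructor
    · rintro ⟨hk, h1, h2⟩; exact ⟨k - 1, by omega, by omega⟩
    · rintro ⟨a, ha, rfl⟩; omega
  rw [he, Finset.sum_image (by intro a _ b _ hab; simp only at hab; omega)]

lemma sumsplit (m i p : ℕ) :
    ∑ k ∈ range (m + p + i + 1), c k * c (m + p + i - k)
      = ((∑ k ∈ range (p+1), c (m + k + i) * c (p - k))
        + ∑ t ∈ range m, c (p + 1 + t) * c (m + i - 1 - t))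
        + ∑ s ∈ range i, c (i - 1 - s) * c (m + p + 1 + s) := by
  have h1 : m + p + i + 1 = (p+1) + (m + i) := by omega
  have e1 : ∑ k ∈ range ((p+1)+(m+i)), c k * c (m + p + i - k)
      = (∑ k ∈ range (p+1), c k * c (m + p + i - k))
        + ∑ x ∈ range (m+i), c ((p+1)+x) * c (m + p + i - ((p+1)+x)) :=
    Finset.sum_range_add _ _ _
  have e2 : ∑ x ∈ range (m+i), c ((p+1)+x) * c (m + p + i - ((p+1)+x))
      = (∑ x ∈ range m, c ((p+1)+x) * c (m + p + i - ((p+1)+x)))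
        + ∑ x ∈ range i, c ((p+1)+(m+x)) * c (m + p + i - ((p+1)+(m+x))) :=
    Finset.sum_range_add _ _ _
  rw [h1, e1, e2, ← add_assoc]
  congr 1
  congr 1
  · rw [← Finset.sum_range_reflect]
    refine Finset.sum_congr rfl fun j hj => ?_
    rw [Finset.mem_range] at hj
    rw [show p + 1 - 1 - j = p - j by omega,
      show m + p + i - (p - j) = m + j + i by omega, mul_comm]
  · refine Finset.sum_congr rfl fun t ht => ?_
    rw [Finset.mem_range] at ht
    rw [show m + p + i - (p + 1 + t) = m + i - 1 - t by omega]
  · refine Finset.sum_congr rfl fun s hs => ?_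
    rw [Finset.mem_range] at hs
    rw [show p + 1 + (m + s) = m + p + 1 + s by omega,
      show m + p + i - (m + p + 1 + s) = i - 1 - s by omega, mul_comm]



noncomputable def Hm (n m : ℕ) : Matrix (Fin n) (Fin n) ℝ :=
  Matrix.of fun i q : Fin n => c (m + q.val + i.val)

noncomputable def Um (n : ℕ) : Matrix (Fin n) (Fin n) ℝ :=
  Matrix.of fun k j : Fin n => if k.val ≤ j.val then c (j.val - k.val) else 0

noncomputable def Nm (n : ℕ) : Matrix (Fin n) (Fin n) ℝ :=
  Matrix.of fun i s : Fin n => if 1 ≤ s.val ∧ s.val ≤ i.val then c (i.val - s.val) else 0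

noncomputable def HB (n m : ℕ) : Matrix (Fin n) (Fin n) ℝ :=
  Matrix.of fun i p : Fin n =>
    ∑ k ∈ Finset.range (m + p.val + i.val + 1), c k * c (m + p.val + i.val - k)

noncomputable def Rm (n m : ℕ) : Matrix (Fin n) (Fin n) ℝ :=
  Matrix.of fun i p : Fin n =>
    ∑ t ∈ Finset.range m, c (p.val + 1 + t) * c (m + i.val - 1 - t)

lemma part1 {n : ℕ} (m : ℕ) (i p : Fin n) :
    ∑ x : Fin n, c (m + x.val + i.val) *
        (if x.val ≤ p.val then c (p.val - x.val) else 0)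
      = ∑ k ∈ Finset.range (p.val + 1), c (m + k + i.val) * c (p.val - k) := by
  have h : ∀ x : Fin n, c (m + x.val + i.val) *
      (if x.val ≤ p.val then c (p.val - x.val) else 0)
      = (fun k : ℕ => if k ≤ p.val then c (m + k + i.val) * c (p.val - k) else 0) x.val := by
    intro x
    by_cases h : x.val ≤ p.val <;> simp [h]
  rw [Finset.sum_congr rfl fun x _ => h x,
    Fin.sum_univ_eq_sum_range (fun k : ℕ => if k ≤ p.val then c (m + k + i.val) * c (p.val - k) else 0) n,
    sum_ite_le _ p.isLt]

lemma part3 {n : ℕ} (m : ℕ) (i p : Fin n) :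
    ∑ x : Fin n, (if 1 ≤ x.val ∧ x.val ≤ i.val then c (i.val - x.val) else 0) *
        c (m + p.val + x.val)
      = ∑ s ∈ Finset.range i.val, c (i.val - 1 - s) * c (m + p.val + 1 + s) := by
  have h : ∀ x : Fin n, (if 1 ≤ x.val ∧ x.val ≤ i.val then c (i.val - x.val) else 0) *
        c (m + p.val + x.val)
      = (fun s : ℕ => if 1 ≤ s ∧ s ≤ i.val then c (i.val - s) * c (m + p.val + s) else 0) x.val := by
    intro x
    by_cases h : 1 ≤ x.val ∧ x.val ≤ i.val <;> simp [h]
  rw [Finset.sum_congr rfl fun x _ => h x,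
    Fin.sum_univ_eq_sum_range (fun s : ℕ => if 1 ≤ s ∧ s ≤ i.val then c (i.val - s) * c (m + p.val + s) else 0) n,
    sum_ite_mid _ i.isLt]
  refine Finset.sum_congr rfl fun s hs => ?_
  rw [Finset.mem_range] at hs
  rw [show i.val - (s + 1) = i.val - 1 - s by omega,
    show m + p.val + (s + 1) = m + p.val + 1 + s by omega]

lemma HB_eq (n m : ℕ) :
    HB c n m = (Hm c n m * Um c n + Rm c n m) + Nm c n * Hm c n m := by
  ext i p
  simp only [HB, Hm, Um, Nm, Rm, Matrix.add_apply, Matrix.mul_apply, Matrix.of_apply]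
  rw [sumsplit c m i.val p.val, part1 c m i p, part3 c m i p]

lemma lhs_trace (n m : ℕ) :
    (∑ p : Fin n,
      (Matrix.of fun i q : Fin n =>
        if q = p then ∑ k ∈ Finset.range (m + p.val + i.val + 1),
            c k * c (m + p.val + i.val - k)
        else c (m + q.val + i.val)).det)
      = Matrix.trace ((Hm c n m).adjugate * HB c n m) := by
  have key : ∀ p : Fin n,
      (Matrix.of fun i q : Fin n =>
        if q = p then ∑ k ∈ Finset.range (m + p.val + i.val + 1),
            c k * c (m + p.val + i.val - k)
        else c (m + q.val + i.val))
      = (Hm c n m).updateCol p (fun i => HB c n m i p) := by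
    intro p
    ext i q
    rw [Matrix.updateCol_apply]
    simp only [Matrix.of_apply, Hm, HB]
  calc (∑ p : Fin n, _) = ∑ p : Fin n, ((Hm c n m).adjugate *ᵥ (fun i => HB c n m i p)) p := by
        refine Finset.sum_congr rfl fun p _ => ?_
        rw [key p, ← Matrix.cramer_apply, Matrix.cramer_eq_adjugate_mulVec]
    _ = Matrix.trace ((Hm c n m).adjugate * HB c n m) := by
        simp [Matrix.trace, Matrix.diag, Matrix.mul_apply, Matrix.mulVec, dotProduct]

lemma trace_adj_mul_left {n : ℕ} (A U : Matrix (Fin n) (Fin n) ℝ) :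
    Matrix.trace (A.adjugate * (A * U)) = A.det * Matrix.trace U := by
  rw [← Matrix.mul_assoc, Matrix.adjugate_mul, Matrix.smul_mul, Matrix.one_mul,
    Matrix.trace_smul, smul_eq_mul]

lemma trace_adj_mul_right {n : ℕ} (A N : Matrix (Fin n) (Fin n) ℝ) :
    Matrix.trace (A.adjugate * (N * A)) = A.det * Matrix.trace N := by
  rw [Matrix.trace_mul_comm, Matrix.mul_assoc, Matrix.mul_adjugate, Matrix.mul_smul,
    Matrix.mul_one, Matrix.trace_smul, smul_eq_mul]

lemma trace_U (n : ℕ) : Matrix.trace (Um c n) = (n : ℝ) * c 0 := by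
  simp [Um, Matrix.trace, Matrix.diag, Finset.sum_const, mul_comm]

lemma trace_N (n : ℕ) : Matrix.trace (Nm c n) = ((n - 1 : ℕ) : ℝ) * c 0 := by
  have : Matrix.trace (Nm c n) = ∑ i ∈ Finset.range n, (if 1 ≤ i then c 0 else 0) := by
    rw [Matrix.trace, ← Fin.sum_univ_eq_sum_range (fun i => if 1 ≤ i then c 0 else 0) n]
    refine Finset.sum_congr rfl fun i _ => ?_
    simp [Nm, Matrix.diag]
  rw [this]
  rcases n with _ | k
  · simp
  · rw [Finset.sum_range_succ']
    simp [mul_comm]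


lemma L4 (n : ℕ) :
    ∑ p : Fin (n+1), c (p.val + 1) *
        ((Hm c (n+1) 1).updateCol p (fun i => c i.val)).det
      = c 0 * (Hm c (n+1) 1).det := by
  set M : Matrix (Fin (n+2)) (Fin (n+2)) ℝ :=
    Matrix.of (fun i j : Fin (n+2) => c ((i.val - 1) + j.val)) with hM
  have hdet : M.det = 0 := by
    refine Matrix.det_zero_of_row_eq (i := 0) (j := 1) (by simp [Fin.ext_iff]) ?_
    funext j
    simp [hM]
  have hexp := Matrix.det_succ_row_zero M
  rw [hdet, Fin.sum_univ_succ] at hexp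
  have h0 : M.submatrix Fin.succ (Fin.succAbove 0) = Hm c (n+1) 1 := by
    ext i q
    simp only [Matrix.submatrix_apply, hM, Matrix.of_apply, Hm, Fin.succAbove_zero,
      Fin.val_succ]
    congr 1
    omega
  have hsub : ∀ l : Fin (n+1),
      ((Hm c (n+1) 1).updateCol l (fun i => c i.val))
        = (M.submatrix Fin.succ (Fin.succAbove (Fin.succ l))).submatrix id
            (Fin.cycleRange l) := by
    intro l
    ext i q
    simp only [Matrix.submatrix_apply, id_eq, hM, Matrix.of_apply, Fin.val_succ]
    rw [Matrix.updateCol_apply]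
    rcases lt_trichotomy q l with h|h|h
    · rw [if_neg (ne_of_lt h), Fin.cycleRange_of_lt h, succAbove_val]
      have hq1 : ((q + 1 : Fin (n+1)) : ℕ) = q.val + 1 :=
        Fin.val_add_one_of_lt (lt_of_lt_of_le h (Fin.le_last l))
      rw [hq1, if_pos (by simp [Fin.val_succ]; omega)]
      simp only [Hm, Matrix.of_apply]
      congr 1
      omega
    · rw [if_pos h, h, Fin.cycleRange_self, succAbove_val]
      rw [if_pos (by simp [Fin.val_succ])]
      simp
    · rw [if_neg (ne_of_gt h), Fin.cycleRange_of_gt h, succAbove_val]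
      rw [if_neg (by simp [Fin.val_succ]; omega)]
      simp only [Hm, Matrix.of_apply]
      congr 1
      omega
  have hsign : ∀ l : Fin (n+1),
      ((Equiv.Perm.sign (Fin.cycleRange l) : ℤ) : ℝ) = (-1 : ℝ) ^ (l.val) := by
    intro l
    rw [Fin.sign_cycleRange]
    push_cast
    ring
  have hdetsub : ∀ l : Fin (n+1),
      ((Hm c (n+1) 1).updateCol l (fun i => c i.val)).det
        = (-1:ℝ)^(l.val) * (M.submatrix Fin.succ (Fin.succAbove (Fin.succ l))).det := by
    intro l
    rw [hsub l, Matrix.det_permute' (Fin.cycleRange l), hsign l]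
  have e0 : (-1:ℝ)^(((0 : Fin (n+2)) : ℕ)) * M 0 0 *
      (M.submatrix Fin.succ (Fin.succAbove 0)).det = c 0 * (Hm c (n+1) 1).det := by
    rw [h0]
    simp [hM]
  have key : ∀ p : Fin (n+1), c (p.val + 1) *
        ((Hm c (n+1) 1).updateCol p (fun i => c i.val)).det
      = -((-1:ℝ)^(((Fin.succ p : Fin (n+2)) : ℕ)) * M 0 (Fin.succ p) *
          (M.submatrix Fin.succ (Fin.succAbove (Fin.succ p))).det) := by
    intro p
    rw [hdetsub p]
    have hM0 : M 0 (Fin.succ p) = c (p.val + 1) := by simp [hM]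
    rw [hM0, Fin.val_succ, pow_succ]
    ring
  rw [Finset.sum_congr rfl fun p _ => key p, Finset.sum_neg_distrib]
  rw [e0] at hexp
  linarith [hexp]


lemma trace_adj_R (n : ℕ) :
    Matrix.trace ((Hm c n 1).adjugate * Rm c n 1)
      = ∑ p : Fin n, c (p.val + 1) *
          ((Hm c n 1).updateCol p (fun i => c i.val)).det := by
  have hR : ∀ (i p : Fin n), Rm c n 1 i p = c (p.val + 1) * c i.val := by
    intro i p
    simp [Rm]
  rw [Matrix.trace]
  refine Finset.sum_congr rfl fun p _ => ?_
  calc Matrix.diag ((Hm c n 1).adjugate * Rm c n 1) p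
      = ∑ j : Fin n, (Hm c n 1).adjugate p j * (c (p.val + 1) * c j.val) := by
        simp [Matrix.diag, Matrix.mul_apply, hR]
    _ = c (p.val + 1) * ∑ j : Fin n, (Hm c n 1).adjugate p j * c j.val := by
        rw [Finset.mul_sum]
        exact Finset.sum_congr rfl fun j _ => by ring
    _ = c (p.val + 1) * ((Hm c n 1).updateCol p (fun i => c i.val)).det := by
        rw [← Matrix.cramer_apply, Matrix.cramer_eq_adjugate_mulVec]
        simp [Matrix.mulVec, dotProduct]


end SumDetBAux

/-- Multilinearity sum identity:
`Σ_{j=m}^{n-1+m} det(A_m,…,B_j,…,A_{n-1+m}) = (2n−1+m) c₀ H^m_n`, where `A_j` is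
the Hankel column `(c_{j+i})ᵢ` and `B_j` the convolution column
`(Σ_{k=0}^{j+i} c_k c_{j+i−k})ᵢ`. -/
theorem sum_det_B (c : ℕ → ℝ) (m : ℕ) (hm : m = 0 ∨ m = 1) (n : ℕ) (hn : 1 ≤ n) :
    (∑ p : Fin n,
      (Matrix.of fun i q : Fin n =>
        if q = p then ∑ k ∈ Finset.range (m + p.val + i.val + 1),
            c k * c (m + p.val + i.val - k)
        else c (m + q.val + i.val)).det) =
      ((2 * n - 1 + m : ℕ) : ℝ) * c 0 * Hk c m n := by
  rw [SumDetBAux.lhs_trace c n m, SumDetBAux.HB_eq, Matrix.mul_add, Matrix.mul_add,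
    Matrix.trace_add, Matrix.trace_add, SumDetBAux.trace_adj_mul_left,
    SumDetBAux.trace_adj_mul_right, SumDetBAux.trace_U, SumDetBAux.trace_N]
  have hH : (SumDetBAux.Hm c n m).det = Hk c m n := by
    unfold Hk SumDetBAux.Hm
    congr 1
    ext i j
    simp only [Matrix.of_apply]
    congr 1
    omega
  rcases hm with rfl | rfl
  · have hR : SumDetBAux.Rm c n 0 = 0 := by
      ext i p
      simp [SumDetBAux.Rm]
    rw [hR, Matrix.mul_zero, Matrix.trace_zero, hH]
    have h1 : ((2 * n - 1 + 0 : ℕ) : ℝ) = 2 * (n : ℝ) - 1 := by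
      rw [Nat.add_zero, Nat.cast_sub (by omega)]
      push_cast
      ring
    have h2 : ((n - 1 : ℕ) : ℝ) = (n : ℝ) - 1 := by
      rw [Nat.cast_sub hn, Nat.cast_one]
    rw [h1, h2]
    push_cast
    ring
  · obtain ⟨k, rfl⟩ : ∃ k, n = k + 1 := ⟨n - 1, by omega⟩
    rw [SumDetBAux.trace_adj_R, SumDetBAux.L4, hH]
    have h1 : ((2 * (k + 1) - 1 + 1 : ℕ) : ℝ) = 2 * ((k : ℝ) + 1) := by
      rw [show 2 * (k + 1) - 1 + 1 = 2 * (k + 1) by omega]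
      push_cast
      ring
    have h2 : ((k + 1 - 1 : ℕ) : ℝ) = (k : ℝ) := by simp
    rw [h1, h2]
    push_cast
    ring
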